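/- Let f : I ⊆ ℝ → ℝ be differentiable on I° with f' integrable on [a,b], where a, b ∈ I° with a < b, and let q > 1 with 1/p + 1/q = 1. Suppose |f'|^q is a P-function on [a,b]. Then |(1/6)[f(a) + 4 f((a+b)/2) + f(b)] - (1/(b-a)) ∫_a^b f(x) dx| ≤ ((b-a)/12)((1 + 2^{p+1})/(3(p+1)))^{1/p} · [(|f'((a+b)/2)|^q + |f'(a)|^q)^{1/q} + (|f'((a+b)/2)|^q + |f'(b)|^q)^{1/q}]. -/

import Mathlib

open MeasureTheory Set Real


lemma abs_rpow_cont {p : ℝ} (hp : 0 < p) : Continuous (fun y : ℝ => |y| ^ p) :=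
  continuous_abs.rpow_const (fun _ => Or.inr hp.le)

lemma abs_rpow_int1 {p : ℝ} (hp : 0 < p) {s : ℝ} (hs : 0 ≤ s) :
    ∫ y in (0:ℝ)..s, |y| ^ p = s ^ (p + 1) / (p + 1) := by
  have he : EqOn (fun y : ℝ => |y| ^ p) (fun y : ℝ => y ^ p) (uIcc 0 s) := by
    intro y hy
    rw [uIcc_of_le hs] at hy
    simp [abs_of_nonneg hy.1]
  rw [intervalIntegral.integral_congr he, integral_rpow (Or.inl (by linarith)),
    Real.zero_rpow (by positivity : p + 1 ≠ 0)]
  ring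

lemma abs_rpow_int2 {p : ℝ} (hp : 0 < p) {h : ℝ} (hh : 0 ≤ h) :
    ∫ y in (-h)..(2*h), |y| ^ p = (1 + 2 ^ (p + 1)) * h ^ (p + 1) / (p + 1) := by
  have h1 : ∫ y in (-h)..(0:ℝ), |y| ^ p = h ^ (p + 1) / (p + 1) := by
    have hcn := intervalIntegral.integral_comp_neg (a := -h) (b := 0) (fun y : ℝ => |y| ^ p)
    simp only [abs_neg, neg_zero, neg_neg] at hcn
    rw [hcn, abs_rpow_int1 hp hh]
  have h2 : ∫ y in (0:ℝ)..(2*h), |y| ^ p = (2*h) ^ (p + 1) / (p + 1) :=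
    abs_rpow_int1 hp (by linarith)
  have hadd := intervalIntegral.integral_add_adjacent_intervals (a := -h) (b := 0) (c := 2*h)
    ((abs_rpow_cont hp).intervalIntegrable (μ := volume) _ _)
    ((abs_rpow_cont hp).intervalIntegrable (μ := volume) _ _)
  rw [← hadd, h1, h2, Real.mul_rpow (by norm_num) hh]
  ring

lemma abs_rpow_int2' {p : ℝ} (hp : 0 < p) {h : ℝ} (hh : 0 ≤ h) :
    ∫ y in (-(2*h))..h, |y| ^ p = (1 + 2 ^ (p + 1)) * h ^ (p + 1) / (p + 1) := by
  have hcn := intervalIntegral.integral_comp_neg (a := -(2*h)) (b := h) (fun y : ℝ => |y| ^ p)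
  simp only [abs_neg, neg_neg] at hcn
  rw [hcn, abs_rpow_int2 hp hh]

lemma half_bound {p q : ℝ} (hpq : Real.HolderConjugate p q) {A B : ℝ} (hAB : A < B)
    {u g : ℝ → ℝ} (hu : Continuous u)
    (hg : AEStronglyMeasurable g (volume.restrict (Set.Ioc A B)))
    {M : ℝ} (hM : ∀ x ∈ Set.Ioc A B, |g x| ^ q ≤ M) :
    ∫ x in A..B, |u x * g x| ≤
      (∫ x in A..B, |u x| ^ p) ^ (1 / p) * ((B - A) * M) ^ (1 / q) := by
  have hq0 : 0 < q := hpq.symm.pos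
  have hM0 : 0 ≤ M := le_trans (Real.rpow_nonneg (abs_nonneg _) _) (hM B ⟨hAB, le_refl _⟩)
  set μ := volume.restrict (Set.Ioc A B) with hμ
  have hfin : IsFiniteMeasure μ := by
    constructor
    rw [hμ, Measure.restrict_apply_univ]
    exact measure_Ioc_lt_top
  have hgb : ∀ᵐ x ∂μ, ‖g x‖ ≤ M ^ (1/q) := by
    filter_upwards [ae_restrict_mem measurableSet_Ioc] with x hx
    rw [Real.norm_eq_abs]
    calc |g x| = (|g x| ^ q) ^ (1/q) := by
          rw [← Real.rpow_mul (abs_nonneg _), mul_one_div, div_self hq0.ne', Real.rpow_one]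
      _ ≤ M ^ (1/q) := Real.rpow_le_rpow (Real.rpow_nonneg (abs_nonneg _) _) (hM x hx)
            (by positivity)
  have hgmem : MemLp g (ENNReal.ofReal q) μ := MemLp.of_bound hg _ hgb
  obtain ⟨C, hC⟩ := (isCompact_Icc (a := A) (b := B)).exists_bound_of_continuousOn
    hu.continuousOn
  have humem : MemLp u (ENNReal.ofReal p) μ := by
    refine MemLp.of_bound hu.aestronglyMeasurable C ?_
    filter_upwards [ae_restrict_mem measurableSet_Ioc] with x hx
    exact hC x (Set.Ioc_subset_Icc_self hx)
  have hold := integral_mul_norm_le_Lp_mul_Lq (μ := μ) hpq humem hgmem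
  have hiq : ∫ x, ‖g x‖ ^ q ∂μ ≤ (B - A) * M := by
    have hint : Integrable (fun x => ‖g x‖ ^ q) μ := by
      rw [← memLp_one_iff_integrable]
      refine MemLp.of_bound ?_ M ?_
      · exact ((abs_rpow_cont hq0).comp_aestronglyMeasurable hg)
      · filter_upwards [ae_restrict_mem measurableSet_Ioc] with x hx
        rw [Real.norm_eq_abs, abs_of_nonneg (Real.rpow_nonneg (norm_nonneg _) _),
          Real.norm_eq_abs]
        exact hM x hx
    calc ∫ x, ‖g x‖ ^ q ∂μ ≤ ∫ _x, M ∂μ := by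
          refine integral_mono_ae hint (integrable_const M) ?_
          filter_upwards [ae_restrict_mem measurableSet_Ioc] with x hx
          rw [Real.norm_eq_abs]
          exact hM x hx
      _ = (B - A) * M := by
          rw [integral_const, hμ, measureReal_restrict_apply_univ, Real.volume_real_Ioc_of_le hAB.le,
            smul_eq_mul]
  rw [intervalIntegral.integral_of_le hAB.le, intervalIntegral.integral_of_le hAB.le]
  calc ∫ x in Set.Ioc A B, |u x * g x| = ∫ x, ‖u x‖ * ‖g x‖ ∂μ := by
        simp_rw [Real.norm_eq_abs, ← abs_mul]
        rfl
    _ ≤ (∫ x, ‖u x‖ ^ p ∂μ) ^ (1/p) * (∫ x, ‖g x‖ ^ q ∂μ) ^ (1/q) := hold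
    _ ≤ (∫ x, ‖u x‖ ^ p ∂μ) ^ (1/p) * ((B - A) * M) ^ (1/q) := by
        refine mul_le_mul_of_nonneg_left
          (Real.rpow_le_rpow (integral_nonneg fun x => Real.rpow_nonneg (norm_nonneg _) _)
            hiq (by positivity))
          (Real.rpow_nonneg (integral_nonneg fun x => Real.rpow_nonneg (norm_nonneg _) _) _)
    _ = (∫ x in Set.Ioc A B, |u x| ^ p) ^ (1 / p) * ((B - A) * M) ^ (1 / q) := by
        simp_rw [Real.norm_eq_abs]
        rfl

lemma const_calc {p q : ℝ} (hp : 1 < p) (hq : 1 < q) (hpq : 1 / p + 1 / q = 1)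
    {d M : ℝ} (hd : 0 < d) (hM : 0 ≤ M) :
    ((1 + 2 ^ (p + 1)) * (d / 6) ^ (p + 1) / (p + 1) / d ^ p) ^ (1 / p) * ((d / 2) * M) ^ (1 / q)
      = (d / 12) * ((1 + 2 ^ (p + 1)) / (3 * (p + 1))) ^ (1 / p) * M ^ (1 / q) := by
  have hp0 : (0:ℝ) < p := by linarith
  have hq0 : (0:ℝ) < q := by linarith
  have hp1 : (0:ℝ) < p + 1 := by linarith
  have h2 : (0:ℝ) < 2 ^ (p + 1) := Real.rpow_pos_of_pos two_pos _
  have hK : (0:ℝ) < (1 + 2 ^ (p + 1)) / (p + 1) := by positivity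
  set K : ℝ := (1 + 2 ^ (p + 1)) / (p + 1) with hKdef
  have e1 : (1 + 2 ^ (p + 1)) * (d / 6) ^ (p + 1) / (p + 1) / d ^ p
      = K * (d / 6 ^ (p + 1)) := by
    rw [Real.div_rpow hd.le (by norm_num),
      show d ^ (p + 1) = d ^ p * d by rw [Real.rpow_add hd, Real.rpow_one]]
    have h6 : (0:ℝ) < (6:ℝ) ^ (p + 1) := Real.rpow_pos_of_pos (by norm_num) _
    have hdp : (0:ℝ) < d ^ p := Real.rpow_pos_of_pos hd _
    field_simp [hKdef]
    rw [hKdef]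
    field_simp
  have e2 : ((1 + 2 ^ (p + 1)) / (3 * (p + 1))) = K / 3 := by
    rw [hKdef, div_div, mul_comm]
  rw [e1, e2]
  have h6p : ((6:ℝ) ^ (p + 1)) ^ (1/p) = 6 * (2 ^ (1/p) * 3 ^ (1/p)) := by
    rw [← Real.rpow_mul (by norm_num : (0:ℝ) ≤ 6),
      show (p + 1) * (1/p) = 1 + 1/p by field_simp,
      Real.rpow_add (by norm_num : (0:ℝ) < 6), Real.rpow_one,
      show (6:ℝ) = 2 * 3 by norm_num, Real.mul_rpow (by norm_num) (by norm_num)]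
  have e3 : (K * (d / 6 ^ (p + 1))) ^ (1/p)
      = K ^ (1/p) * d ^ (1/p) / (6 * (2 ^ (1/p) * 3 ^ (1/p))) := by
    rw [Real.mul_rpow hK.le (by positivity),
      Real.div_rpow hd.le (by positivity), h6p]
    ring
  have e4 : ((d / 2) * M) ^ (1/q) = d ^ (1/q) * M ^ (1/q) / 2 ^ (1/q) := by
    rw [Real.mul_rpow (by positivity) hM, Real.div_rpow hd.le (by norm_num)]
    ring
  have e5 : (K / 3) ^ (1/p) = K ^ (1/p) / 3 ^ (1/p) :=
    Real.div_rpow hK.le (by norm_num : (0:ℝ) ≤ 3) (1/p)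
  rw [e3, e4, e5]
  have ed : d ^ (1/p) * d ^ (1/q) = d := by
    rw [← Real.rpow_add hd, hpq, Real.rpow_one]
  have e2' : (2:ℝ) ^ (1/p) * 2 ^ (1/q) = 2 := by
    rw [← Real.rpow_add two_pos, hpq, Real.rpow_one]
  have h2p : (0:ℝ) < 2 ^ (1/p) := Real.rpow_pos_of_pos two_pos _
  have h3p : (0:ℝ) < 3 ^ (1/p) := Real.rpow_pos_of_pos (by norm_num) _
  have h2q : (0:ℝ) < 2 ^ (1/q) := Real.rpow_pos_of_pos two_pos _
  field_simp
  linear_combination (12 * M^(1/q)) * ed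
    - (6 * M^(1/q) * d) * e2'

/-- `g` is a `P`-function on the set `s`: it is nonnegative on `s` and
`g (t*x + (1-t)*y) ≤ g x + g y` for all `x, y ∈ s` and `t ∈ [0,1]`. -/
def IsPFunctionOn (g : ℝ → ℝ) (s : Set ℝ) : Prop :=
  (∀ x ∈ s, 0 ≤ g x) ∧
    ∀ x ∈ s, ∀ y ∈ s, ∀ t ∈ Set.Icc (0:ℝ) 1, g (t * x + (1 - t) * y) ≤ g x + g y

theorem stmt_8 (I : Set ℝ) (hI : Convex ℝ I) (f f' : ℝ → ℝ)
    (a b : ℝ) (ha : a ∈ interior I) (hb : b ∈ interior I) (hab : a < b)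
    (hdf : ∀ x ∈ interior I, HasDerivAt f (f' x) x)
    (hint : IntervalIntegrable f' MeasureTheory.volume a b)
    (p q : ℝ) (hp : 1 < p) (hq : 1 < q) (hpq : 1 / p + 1 / q = 1)
    (hP : IsPFunctionOn (fun x => |f' x| ^ q) (Set.Icc a b)) :
    |(1 / 6) * (f a + 4 * f ((a + b) / 2) + f b) - (1 / (b - a)) * ∫ x in a..b, f x|
      ≤ ((b - a) / 12) * ((1 + 2 ^ (p + 1)) / (3 * (p + 1))) ^ (1 / p)
        * ((|f' ((a + b) / 2)| ^ q + |f' a| ^ q) ^ (1 / q)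
          + (|f' ((a + b) / 2)| ^ q + |f' b| ^ q) ^ (1 / q)) := by
  have hpq' : Real.HolderConjugate p q := Real.holderConjugate_iff.mpr ⟨hp, by simpa [one_div] using hpq⟩
  set m : ℝ := (a + b) / 2 with hm
  have hd : 0 < b - a := by linarith
  have ham : a < m := by rw [hm]; linarith
  have hmb : m < b := by rw [hm]; linarith
  -- [a,b] ⊆ interior I
  have hsub : Set.Icc a b ⊆ interior I := by
    have := (hI.interior).segment_subset ha hb
    rwa [segment_eq_Icc hab.le] at this
  -- continuity of f on [a,b]
  have hfc : ContinuousOn f (Set.Icc a b) := fun x hx =>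
    (hdf x (hsub hx)).continuousAt.continuousWithinAt
  have huIcc1 : Set.uIcc a m ⊆ Set.Icc a b := by
    rw [uIcc_of_le ham.le]; exact Set.Icc_subset_Icc le_rfl hmb.le
  have huIcc2 : Set.uIcc m b ⊆ Set.Icc a b := by
    rw [uIcc_of_le hmb.le]; exact Set.Icc_subset_Icc ham.le le_rfl
  have hfi1 : IntervalIntegrable f' volume a m :=
    hint.mono_set (by rw [uIcc_of_le hab.le]; exact huIcc1)
  have hfi2 : IntervalIntegrable f' volume m b :=
    hint.mono_set (by rw [uIcc_of_le hab.le]; exact huIcc2)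
  have hfint1 : IntervalIntegrable f volume a m := (hfc.mono huIcc1).intervalIntegrable
  have hfint2 : IntervalIntegrable f volume m b := (hfc.mono huIcc2).intervalIntegrable
  -- integration by parts on both halves
  have hu1 : ∀ x ∈ Set.uIcc a m,
      HasDerivAt (fun y => (y - a) / (b - a) - 1/6) (1 / (b - a)) x := by
    intro x _
    simpa using (((hasDerivAt_id x).sub_const a).div_const (b - a)).sub_const (1/6 : ℝ)
  have hu2 : ∀ x ∈ Set.uIcc m b,
      HasDerivAt (fun y => (y - a) / (b - a) - 5/6) (1 / (b - a)) x := by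
    intro x _
    simpa using (((hasDerivAt_id x).sub_const a).div_const (b - a)).sub_const (5/6 : ℝ)
  have parts1 := intervalIntegral.integral_mul_deriv_eq_deriv_mul hu1
    (fun x hx => hdf x (hsub (huIcc1 hx)))
    ((continuous_const (y := 1 / (b - a))).intervalIntegrable a m) hfi1
  have parts2 := intervalIntegral.integral_mul_deriv_eq_deriv_mul hu2
    (fun x hx => hdf x (hsub (huIcc2 hx)))
    ((continuous_const (y := 1 / (b - a))).intervalIntegrable m b) hfi2
  have hsplit : (∫ x in a..b, f x) = (∫ x in a..m, f x) + ∫ x in m..b, f x :=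
    (intervalIntegral.integral_add_adjacent_intervals hfint1 hfint2).symm
  -- the Simpson identity
  have hS : (1 / 6) * (f a + 4 * f m + f b) - (1 / (b - a)) * ∫ x in a..b, f x
      = (∫ x in a..m, ((x - a) / (b - a) - 1/6) * f' x)
        + (∫ x in m..b, ((x - a) / (b - a) - 5/6) * f' x) := by
    rw [parts1, parts2, hsplit, intervalIntegral.integral_const_mul,
      intervalIntegral.integral_const_mul]
    have hm' : m = (a + b) / 2 := hm
    field_simp
    ring
  -- pointwise bounds from the P-function property
  have key₁ : ∀ x ∈ Set.Ioc a m, |f' x| ^ q ≤ |f' m| ^ q + |f' a| ^ q := by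
    intro x hx
    have hma : 0 < m - a := by linarith
    have ht : (x - a) / (m - a) ∈ Set.Icc (0:ℝ) 1 :=
      ⟨div_nonneg (by linarith [hx.1]) hma.le, (div_le_one hma).2 (by linarith [hx.2])⟩
    have := hP.2 m ⟨ham.le, hmb.le⟩ a ⟨le_rfl, hab.le⟩ _ ht
    have hxeq : (x - a) / (m - a) * m + (1 - (x - a) / (m - a)) * a = x := by
      field_simp
      ring
    rwa [hxeq] at this
  have key₂ : ∀ x ∈ Set.Ioc m b, |f' x| ^ q ≤ |f' m| ^ q + |f' b| ^ q := by
    intro x hx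
    have hbm : 0 < b - m := by linarith
    have ht : (b - x) / (b - m) ∈ Set.Icc (0:ℝ) 1 :=
      ⟨div_nonneg (by linarith [hx.2]) hbm.le, (div_le_one hbm).2 (by linarith [hx.1])⟩
    have := hP.2 m ⟨ham.le, hmb.le⟩ b ⟨hab.le, le_rfl⟩ _ ht
    have hxeq : (b - x) / (b - m) * m + (1 - (b - x) / (b - m)) * b = x := by
      field_simp
      ring
    rwa [hxeq] at this
  -- measurability
  have hmeas1 : AEStronglyMeasurable f' (volume.restrict (Set.Ioc a m)) :=
    hint.1.aestronglyMeasurable.mono_measure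
      (Measure.restrict_mono (Set.Ioc_subset_Ioc le_rfl hmb.le) le_rfl)
  have hmeas2 : AEStronglyMeasurable f' (volume.restrict (Set.Ioc m b)) :=
    hint.1.aestronglyMeasurable.mono_measure
      (Measure.restrict_mono (Set.Ioc_subset_Ioc ham.le le_rfl) le_rfl)
  -- Hölder bounds on the halves
  have hb1 := half_bound hpq' ham (u := fun x => (x - a) / (b - a) - 1/6)
    (by fun_prop) hmeas1 key₁
  have hb2 := half_bound hpq' hmb (u := fun x => (x - a) / (b - a) - 5/6)
    (by fun_prop) hmeas2 key₂
  -- kernel integrals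
  have hp0 : 0 < p := by linarith
  have hker1 : (∫ x in a..m, |(x - a) / (b - a) - 1/6| ^ p)
      = (1 + 2 ^ (p + 1)) * ((b - a)/6) ^ (p + 1) / (p + 1) / (b - a) ^ p := by
    have hcong : ∀ x : ℝ, |(x - a) / (b - a) - 1/6| ^ p
        = |x - (a + (b - a)/6)| ^ p / (b - a) ^ p := by
      intro x
      rw [show (x - a) / (b - a) - 1/6 = (x - (a + (b - a)/6)) / (b - a) by
        field_simp; ring]
      rw [abs_div, abs_of_pos hd, Real.div_rpow (abs_nonneg _) hd.le]
    simp_rw [hcong, intervalIntegral.integral_div]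
    congr 1
    have := intervalIntegral.integral_comp_sub_right (a := a) (b := m)
      (fun y : ℝ => |y| ^ p) (a + (b - a)/6)
    rw [this, show a - (a + (b - a)/6) = -((b - a)/6) by ring,
      show m - (a + (b - a)/6) = 2 * ((b - a)/6) by rw [hm]; ring,
      abs_rpow_int2 hp0 (by linarith)]
  have hker2 : (∫ x in m..b, |(x - a) / (b - a) - 5/6| ^ p)
      = (1 + 2 ^ (p + 1)) * ((b - a)/6) ^ (p + 1) / (p + 1) / (b - a) ^ p := by
    have hcong : ∀ x : ℝ, |(x - a) / (b - a) - 5/6| ^ p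
        = |x - (a + 5*(b - a)/6)| ^ p / (b - a) ^ p := by
      intro x
      rw [show (x - a) / (b - a) - 5/6 = (x - (a + 5*(b - a)/6)) / (b - a) by
        field_simp; ring]
      rw [abs_div, abs_of_pos hd, Real.div_rpow (abs_nonneg _) hd.le]
    simp_rw [hcong, intervalIntegral.integral_div]
    congr 1
    have := intervalIntegral.integral_comp_sub_right (a := m) (b := b)
      (fun y : ℝ => |y| ^ p) (a + 5*(b - a)/6)
    rw [this, show m - (a + 5*(b - a)/6) = -(2 * ((b - a)/6)) by rw [hm]; ring,
      show b - (a + 5*(b - a)/6) = (b - a)/6 by ring,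
      abs_rpow_int2' hp0 (by linarith)]
  -- assemble
  have hC1 := const_calc hp hq hpq hd
    (by positivity : (0:ℝ) ≤ |f' m| ^ q + |f' a| ^ q)
  have hC2 := const_calc hp hq hpq hd
    (by positivity : (0:ℝ) ≤ |f' m| ^ q + |f' b| ^ q)
  have hma2 : m - a = (b - a) / 2 := by rw [hm]; ring
  have hbm2 : b - m = (b - a) / 2 := by rw [hm]; ring
  rw [hker1, hma2, hC1] at hb1
  rw [hker2, hbm2, hC2] at hb2
  calc |(1 / 6) * (f a + 4 * f m + f b) - (1 / (b - a)) * ∫ x in a..b, f x|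
      ≤ |∫ x in a..m, ((x - a) / (b - a) - 1/6) * f' x|
        + |∫ x in m..b, ((x - a) / (b - a) - 5/6) * f' x| := by
        rw [hS]; exact abs_add_le _ _
    _ ≤ (∫ x in a..m, |((x - a) / (b - a) - 1/6) * f' x|)
        + ∫ x in m..b, |((x - a) / (b - a) - 5/6) * f' x| :=
        add_le_add (intervalIntegral.abs_integral_le_integral_abs ham.le)
          (intervalIntegral.abs_integral_le_integral_abs hmb.le)
    _ ≤ ((b - a) / 12) * ((1 + 2 ^ (p + 1)) / (3 * (p + 1))) ^ (1 / p)
          * (|f' m| ^ q + |f' a| ^ q) ^ (1 / q)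
        + ((b - a) / 12) * ((1 + 2 ^ (p + 1)) / (3 * (p + 1))) ^ (1 / p)
          * (|f' m| ^ q + |f' b| ^ q) ^ (1 / q) := add_le_add hb1 hb2
    _ = ((b - a) / 12) * ((1 + 2 ^ (p + 1)) / (3 * (p + 1))) ^ (1 / p)
        * ((|f' m| ^ q + |f' a| ^ q) ^ (1 / q) + (|f' m| ^ q + |f' b| ^ q) ^ (1 / q)) := by
        ring
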